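/- Let F be a field of characteristic 2 and let α, β, a, b ∈ F with β ≠ 0. Then there is an F-algebra isomorphism [α, β) ≅ [α + a² + a + b²·β, β). -/

import Mathlib

open scoped TensorProduct

/-- The relations defining the characteristic two quaternion symbol algebra `[α, β)`:
`x² + x = α`, `y² = β`, `xy + yx = y`. -/
inductive QuatSymbolRel (F : Type*) [CommRing F] (α β : F) :
    FreeAlgebra F (Fin 2) → FreeAlgebra F (Fin 2) → Prop
  | x_rel : QuatSymbolRel F α β
      (FreeAlgebra.ι F (0 : Fin 2) * FreeAlgebra.ι F (0 : Fin 2) + FreeAlgebra.ι F (0 : Fin 2))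
      (algebraMap F (FreeAlgebra F (Fin 2)) α)
  | y_rel : QuatSymbolRel F α β
      (FreeAlgebra.ι F (1 : Fin 2) * FreeAlgebra.ι F (1 : Fin 2))
      (algebraMap F (FreeAlgebra F (Fin 2)) β)
  | xy_rel : QuatSymbolRel F α β
      (FreeAlgebra.ι F (0 : Fin 2) * FreeAlgebra.ι F (1 : Fin 2) +
        FreeAlgebra.ι F (1 : Fin 2) * FreeAlgebra.ι F (0 : Fin 2))
      (FreeAlgebra.ι F (1 : Fin 2))

/-- The characteristic two quaternion symbol algebra `[α, β)` over `F`: the `F`-algebra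
generated by `x, y` subject to `x² + x = α`, `y² = β`, `xy + yx = y`. -/
def QuatSymbol (F : Type*) [CommRing F] (α β : F) :=
  RingQuot (QuatSymbolRel F α β)

noncomputable instance (F : Type*) [CommRing F] (α β : F) : Ring (QuatSymbol F α β) :=
  inferInstanceAs (Ring (RingQuot (QuatSymbolRel F α β)))

noncomputable instance (F : Type*) [CommRing F] (α β : F) : Algebra F (QuatSymbol F α β) :=
  inferInstanceAs (Algebra F (RingQuot (QuatSymbolRel F α β)))

section ringlemmas
variable {R : Type*} [Ring R]

lemma ring_key1 (h2 : ∀ z : R, z + z = 0) (X Y A B α' β' : R)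
    (hA : ∀ z, A * z = z * A) (hB : ∀ z, B * z = z * B)
    (hX : X * X + X = α') (hY : Y * Y = β') (hXY : X * Y + Y * X = Y) :
    (X + A + B * Y) * (X + A + B * Y) + (X + A + B * Y)
      = α' + A * A + A + B * B * β' := by
  have e1 : (X + A + B * Y) * (X + A + B * Y) + (X + A + B * Y)
      = (X * X + X) + (X * A + A * X) + (X * (B * Y) + (B * Y) * X)
        + ((B * Y) * A + A * (B * Y)) + A * A + (B * Y) * (B * Y) + A + B * Y := by
    noncomm_ring
  have e2 : X * A + A * X = 0 := by rw [hA X, h2]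
  have e3 : X * (B * Y) + (B * Y) * X = B * Y := by
    rw [← mul_assoc X B Y, ← hB X, mul_assoc B X Y, mul_assoc B Y X, ← mul_add, hXY]
  have e4 : (B * Y) * A + A * (B * Y) = 0 := by rw [hA (B * Y), h2]
  have e5 : (B * Y) * (B * Y) = B * B * β' := by
    rw [mul_assoc B Y (B * Y), ← mul_assoc Y B Y, ← hB Y, mul_assoc B Y Y, hY, ← mul_assoc]
  rw [e1, e2, e3, e4, e5, hX]
  have e6 : α' + 0 + B * Y + 0 + A * A + B * B * β' + A + B * Y
      = (α' + A * A + A + B * B * β') + (B * Y + B * Y) := by noncomm_ring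
  rw [e6, h2, add_zero]

lemma ring_key2 (h2 : ∀ z : R, z + z = 0) (X Y A B : R)
    (hA : ∀ z, A * z = z * A) (hB : ∀ z, B * z = z * B)
    (hXY : X * Y + Y * X = Y) :
    (X + A + B * Y) * Y + Y * (X + A + B * Y) = Y := by
  have e1 : (X + A + B * Y) * Y + Y * (X + A + B * Y)
      = (X * Y + Y * X) + (A * Y + Y * A) + (B * (Y * Y) + Y * (B * Y)) := by noncomm_ring
  have e2 : A * Y + Y * A = 0 := by rw [hA Y, h2]
  have e3 : B * (Y * Y) + Y * (B * Y) = 0 := by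
    rw [← mul_assoc Y B Y, ← hB Y, mul_assoc B Y Y, h2]
  rw [e1, e2, e3, hXY, add_zero, add_zero]

end ringlemmas

section quat
variable (F : Type*) [CommRing F] (α β : F)

/-- Generator `x` of `[α,β)`. -/
noncomputable def quatX : QuatSymbol F α β :=
  RingQuot.mkAlgHom F (QuatSymbolRel F α β) (FreeAlgebra.ι F (0 : Fin 2))

/-- Generator `y` of `[α,β)`. -/
noncomputable def quatY : QuatSymbol F α β :=
  RingQuot.mkAlgHom F (QuatSymbolRel F α β) (FreeAlgebra.ι F (1 : Fin 2))

lemma quatX_rel : quatX F α β * quatX F α β + quatX F α β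
    = algebraMap F (QuatSymbol F α β) α := by
  have h := RingQuot.mkAlgHom_rel F (QuatSymbolRel.x_rel (F := F) (α := α) (β := β))
  simp [quatX, map_add, map_mul] at h
  exact h

lemma quatY_rel : quatY F α β * quatY F α β = algebraMap F (QuatSymbol F α β) β := by
  have h := RingQuot.mkAlgHom_rel F (QuatSymbolRel.y_rel (F := F) (α := α) (β := β))
  simp [quatY, map_add, map_mul] at h
  exact h

lemma quatXY_rel : quatX F α β * quatY F α β + quatY F α β * quatX F α β = quatY F α β := by
  have h := RingQuot.mkAlgHom_rel F (QuatSymbolRel.xy_rel (F := F) (α := α) (β := β))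
  simp [quatX, quatY, map_add, map_mul] at h
  exact h

end quat

section char2
variable {F : Type*} [Field F] [CharP F 2]

lemma quat_add_self (α β : F) (z : QuatSymbol F α β) : z + z = 0 := by
  have h2 : (2 : QuatSymbol F α β) = 0 := by
    have : ((2 : ℕ) : QuatSymbol F α β) = algebraMap F _ ((2 : ℕ) : F) := by
      rw [map_natCast]
    rw [show (2 : QuatSymbol F α β) = ((2 : ℕ) : QuatSymbol F α β) by norm_num, this,
      CharP.cast_eq_zero F 2, map_zero]
  rw [← two_mul, h2, zero_mul]

/-- The homomorphism `[α,β) →ₐ [α',β)` sending `x ↦ x' + a + b y'`, `y ↦ y'`,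
valid when `α = α' + a² + a + b²β`. -/
noncomputable def quatAuxHom (α β α' a b : F) (h : α' + a ^ 2 + a + b ^ 2 * β = α) :
    QuatSymbol F α β →ₐ[F] QuatSymbol F α' β :=
  RingQuot.liftAlgHom F
    ⟨FreeAlgebra.lift F
      ![quatX F α' β + algebraMap F _ a + algebraMap F _ b * quatY F α' β, quatY F α' β], by
      intro u v rel
      induction rel with
      | x_rel =>
        simp only [map_add, map_mul, FreeAlgebra.lift_ι_apply, AlgHom.commutes,
          Matrix.cons_val_zero]
        rw [ring_key1 (quat_add_self α' β) (quatX F α' β) (quatY F α' β)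
          (algebraMap F _ a) (algebraMap F _ b) (algebraMap F _ α') (algebraMap F _ β)
          (fun z => Algebra.commutes a z) (fun z => Algebra.commutes b z)
          (quatX_rel F α' β) (quatY_rel F α' β) (quatXY_rel F α' β)]
        rw [← map_mul, ← map_mul, ← map_mul, ← map_add, ← map_add, ← map_add]
        rw [show α' + a * a + a + b * b * β = α' + a ^ 2 + a + b ^ 2 * β by ring, h]
      | y_rel =>
        simp only [map_add, map_mul, FreeAlgebra.lift_ι_apply, AlgHom.commutes,
          Matrix.cons_val_one, Matrix.head_cons]
        exact quatY_rel F α' β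
      | xy_rel =>
        simp only [map_add, map_mul, FreeAlgebra.lift_ι_apply,
          Matrix.cons_val_zero, Matrix.cons_val_one, Matrix.head_cons]
        exact ring_key2 (quat_add_self α' β) (quatX F α' β) (quatY F α' β)
          (algebraMap F _ a) (algebraMap F _ b)
          (fun z => Algebra.commutes a z) (fun z => Algebra.commutes b z)
          (quatXY_rel F α' β)⟩

lemma quatAuxHom_X (α β α' a b : F) (h : α' + a ^ 2 + a + b ^ 2 * β = α) :
    quatAuxHom α β α' a b h (quatX F α β)
      = quatX F α' β + algebraMap F _ a + algebraMap F _ b * quatY F α' β := by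
  unfold quatAuxHom quatX
  exact (RingQuot.liftAlgHom_mkAlgHom_apply _ _ _ _).trans (FreeAlgebra.lift_ι_apply _ _)

lemma quatAuxHom_Y (α β α' a b : F) (h : α' + a ^ 2 + a + b ^ 2 * β = α) :
    quatAuxHom α β α' a b h (quatY F α β) = quatY F α' β := by
  unfold quatAuxHom quatY
  exact (RingQuot.liftAlgHom_mkAlgHom_apply _ _ _ _).trans (FreeAlgebra.lift_ι_apply _ _)

lemma quatAuxHom_comp (α β α' a b : F) (h : α' + a ^ 2 + a + b ^ 2 * β = α)
    (h' : α + a ^ 2 + a + b ^ 2 * β = α') :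
    (quatAuxHom α' β α a b h').comp (quatAuxHom α β α' a b h) = AlgHom.id F _ := by
  apply RingQuot.ringQuot_ext'
  apply FreeAlgebra.hom_ext
  funext i
  fin_cases i <;>
    simp only [Function.comp_apply, AlgHom.coe_comp, AlgHom.id_comp, Function.comp,
      AlgHom.coe_id, id_eq]
  · show (quatAuxHom α' β α a b h') ((quatAuxHom α β α' a b h) (quatX F α β)) = quatX F α β
    rw [quatAuxHom_X, map_add, map_add, map_mul, quatAuxHom_X, quatAuxHom_Y,
      AlgHom.commutes, AlgHom.commutes]
    have := quat_add_self α β (algebraMap F _ a + algebraMap F _ b * quatY F α β)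
    calc quatX F α β + algebraMap F _ a + algebraMap F _ b * quatY F α β
          + algebraMap F _ a + algebraMap F _ b * quatY F α β
        = quatX F α β + ((algebraMap F _ a + algebraMap F _ b * quatY F α β)
          + (algebraMap F _ a + algebraMap F _ b * quatY F α β)) := by abel
      _ = quatX F α β := by rw [this, add_zero]
  · show (quatAuxHom α' β α a b h') ((quatAuxHom α β α' a b h) (quatY F α β)) = quatY F α β
    rw [quatAuxHom_Y, quatAuxHom_Y]

end char2

/-- A `Λ₁` step on one symbol: `[α,β) ≅ [α + a² + a + b²β, β)`. -/
theorem quatSymbol_lambda1_separable (F : Type*) [Field F] [CharP F 2] (α β a b : F)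
    (hβ : β ≠ 0) :
    Nonempty (QuatSymbol F α β ≃ₐ[F] QuatSymbol F (α + a ^ 2 + a + b ^ 2 * β) β) := by
  have h' : α + a ^ 2 + a + b ^ 2 * β = α + a ^ 2 + a + b ^ 2 * β := rfl
  have h : (α + a ^ 2 + a + b ^ 2 * β) + a ^ 2 + a + b ^ 2 * β = α := by
    have := CharTwo.add_self_eq_zero (R := F)
    linear_combination this (a ^ 2) + this a + this (b ^ 2 * β)
  exact ⟨AlgEquiv.ofAlgHom (quatAuxHom α β _ a b h) (quatAuxHom _ β α a b h')
    (quatAuxHom_comp _ β α a b h' h) (quatAuxHom_comp α β _ a b h h')⟩
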